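/- Fix integers n1, n2 ≥ 3 and θ ∈ ℝ^5. Then λ_min(Q̃_{2n1,2n2}(θ)) ≤ λ_min(Q_{n1,n2}(θ)); that is, the smallest eigenvalue of the block-circulant approximation on the doubled lattice of size 2n1 × 2n2 is a lower bound for the smallest eigenvalue of the precision matrix on the lattice of size n1 × n2. -/

import Mathlib

open Matrix

/-- Smallest element of the real spectrum of a real (symmetric) matrix. -/
noncomputable def lamMin {m : Type} [Fintype m] [DecidableEq m] (M : Matrix m m ℝ) : ℝ :=
  sInf (spectrum ℝ M)

/-- Block-Toeplitz block `T_{n1,n2}(x,y,z)`, indexed by pairs `(a,b)` with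
`a ∈ Fin n2`, `b ∈ Fin n1`. -/
def Tmat (n1 n2 : ℕ) (x y z : ℝ) :
    Matrix (Fin n2 × Fin n1) (Fin n2 × Fin n1) ℝ := fun p q =>
  if q = p then y
  else if (q.1 = p.1 ∧ (q.2 : ℕ) = (p.2 : ℕ) + 1) ∨ (q.2 = p.2 ∧ (q.1 : ℕ) = (p.1 : ℕ) + 1) then z
  else if (q.1 = p.1 ∧ (q.2 : ℕ) + 1 = (p.2 : ℕ)) ∨ (q.2 = p.2 ∧ (q.1 : ℕ) + 1 = (p.1 : ℕ)) then x
  else 0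

/-- Block-circulant block `C_{n1,n2}(x,y,z)`. -/
def Cmat (n1 n2 : ℕ) (x y z : ℝ) :
    Matrix (Fin n2 × Fin n1) (Fin n2 × Fin n1) ℝ := fun p q =>
  if q = p then y
  else if (q.1 = p.1 ∧ (q.2 : ℕ) = ((p.2 : ℕ) + 1) % n1) ∨
          (q.2 = p.2 ∧ (q.1 : ℕ) = ((p.1 : ℕ) + 1) % n2) then z
  else if (q.1 = p.1 ∧ ((q.2 : ℕ) + 1) % n1 = (p.2 : ℕ)) ∨
          (q.2 = p.2 ∧ ((q.1 : ℕ) + 1) % n2 = (p.1 : ℕ)) then x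
  else 0

lemma exists_eigenvector_of_mem_spectrum' {n : Type} [Fintype n] [DecidableEq n]
    {M : Matrix n n ℝ} {μ : ℝ} (h : μ ∈ spectrum ℝ M) :
    ∃ v : n → ℝ, v ≠ 0 ∧ M *ᵥ v = μ • v := by
  have h' : μ ∈ spectrum ℝ (Matrix.toLin' M) := by
    rw [show Matrix.toLin' M = Matrix.toLinAlgEquiv' M from rfl, AlgEquiv.spectrum_eq]; exact h
  have hE : Module.End.HasEigenvalue (Matrix.toLin' M) μ :=
    Module.End.HasEigenvalue.of_mem_spectrum h'
  obtain ⟨v, hv⟩ := hE.exists_hasEigenvector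
  exact ⟨v, hv.2, by simpa [Matrix.toLin'_apply] using hv.apply_eq_smul⟩

lemma quadform_lower' {n : Type} [Fintype n] [DecidableEq n]
    {M : Matrix n n ℝ} (hM : M.IsHermitian) (c : ℝ) (hc : ∀ i, c ≤ hM.eigenvalues i)
    (x : n → ℝ) : c * (x ⬝ᵥ x) ≤ x ⬝ᵥ (M *ᵥ x) := by
  set U : Matrix n n ℝ := (hM.eigenvectorUnitary : Matrix n n ℝ) with hU
  have hUU : U * star U = 1 := (Matrix.mem_unitaryGroup_iff).mp (hM.eigenvectorUnitary).2
  set y : n → ℝ := star U *ᵥ x with hy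
  have hUy : U *ᵥ y = x := by
    rw [hy, Matrix.mulVec_mulVec, hUU, Matrix.one_mulVec]
  have hxy : ∀ z : n → ℝ, x ⬝ᵥ (U *ᵥ z) = y ⬝ᵥ z := by
    intro z
    rw [dotProduct_mulVec]
    congr 1
    rw [hy, ← Matrix.mulVec_transpose, Matrix.star_eq_conjTranspose,
      Matrix.conjTranspose_eq_transpose_of_trivial]
  have hxx : x ⬝ᵥ x = y ⬝ᵥ y := by
    calc x ⬝ᵥ x = x ⬝ᵥ (U *ᵥ y) := by rw [hUy]
    _ = y ⬝ᵥ y := hxy y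
  have hq : x ⬝ᵥ (M *ᵥ x) = ∑ i, hM.eigenvalues i * (y i * y i) := by
    conv_lhs => rw [hM.spectral_theorem, Unitary.conjStarAlgAut_apply]
    rw [← Matrix.mulVec_mulVec, ← Matrix.mulVec_mulVec, hxy, ← hy]
    simp [Matrix.mulVec_diagonal, dotProduct, mul_comm, mul_left_comm]
  rw [hq, hxx, dotProduct, Finset.mul_sum]
  apply Finset.sum_le_sum
  intro i _
  have := mul_le_mul_of_nonneg_right (hc i) (mul_self_nonneg (y i))
  linarith

lemma dotProduct_self_pos {n : Type} [Fintype n] {v : n → ℝ} (hv : v ≠ 0) :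
    0 < v ⬝ᵥ v := by
  obtain ⟨j, hj⟩ : ∃ j, v j ≠ 0 := by
    by_contra h; push_neg at h; exact hv (funext h)
  rw [dotProduct]
  exact Finset.sum_pos' (fun i _ => mul_self_nonneg (v i))
    ⟨j, Finset.mem_univ j, mul_self_pos.mpr hj⟩


lemma lamMin_facts {n : Type} [Fintype n] [DecidableEq n] [Nonempty n]
    {M : Matrix n n ℝ} (hM : M.IsHermitian) :
    (∀ i, lamMin M ≤ hM.eigenvalues i) ∧ (∃ i0, lamMin M = hM.eigenvalues i0) := by
  obtain ⟨i0, -, hmin⟩ := Finset.exists_min_image Finset.univ hM.eigenvalues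
    ⟨Classical.arbitrary n, Finset.mem_univ _⟩
  have hsub : spectrum ℝ M ⊆ Set.Ici (hM.eigenvalues i0) := by
    intro μ hμ
    obtain ⟨v, hv0, hv⟩ := exists_eigenvector_of_mem_spectrum' hμ
    have h1 : hM.eigenvalues i0 * (v ⬝ᵥ v) ≤ v ⬝ᵥ (M *ᵥ v) :=
      quadform_lower' hM _ (fun i => hmin i (Finset.mem_univ i)) v
    have h2 : v ⬝ᵥ (M *ᵥ v) = μ * (v ⬝ᵥ v) := by
      rw [hv, dotProduct_smul]; ring_nf
    have h3 : 0 < v ⬝ᵥ v := dotProduct_self_pos hv0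
    have : hM.eigenvalues i0 * (v ⬝ᵥ v) ≤ μ * (v ⬝ᵥ v) := by rw [← h2]; exact h1
    exact le_of_mul_le_mul_right (by linarith) h3
  have hbdd : BddBelow (spectrum ℝ M) := ⟨hM.eigenvalues i0, fun μ hμ => hsub hμ⟩
  have hmem : ∀ i, hM.eigenvalues i ∈ spectrum ℝ M := fun i =>
    hM.eigenvalues_mem_spectrum_real i
  have hle : ∀ i, lamMin M ≤ hM.eigenvalues i := fun i => csInf_le hbdd (hmem i)
  refine ⟨hle, i0, le_antisymm (hle i0) (le_csInf ⟨_, hmem i0⟩ fun μ hμ => hsub hμ)⟩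

lemma sum_extend {m n : Type} [Fintype m] [Fintype n] [DecidableEq n]
    (f : m → n) (hf : Function.Injective f) (F : n → ℝ)
    (hF : ∀ j, (¬ ∃ i, f i = j) → F j = 0) : ∑ j, F j = ∑ i, F (f i) :=
  calc ∑ j, F j = ∑ j ∈ Finset.univ.image f, F j :=
        (Finset.sum_subset (Finset.subset_univ _)
          (fun j _ hj => hF j (by simpa using hj))).symm
    _ = ∑ i, F (f i) := Finset.sum_image (fun a _ b _ h => hf h)

theorem lamMin_submatrix_le {m n : Type} [Fintype m] [DecidableEq m] [Fintype n]
    [DecidableEq n] [Nonempty m] {B : Matrix n n ℝ} (hB : B.IsHermitian)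
    (f : m → n) (hf : Function.Injective f) :
    lamMin B ≤ lamMin (B.submatrix f f) := by
  haveI : Nonempty n := ⟨f (Classical.arbitrary m)⟩
  set A := B.submatrix f f with hAdef
  have hA : A.IsHermitian := by
    ext i j
    simp only [hAdef, Matrix.conjTranspose_apply, Matrix.submatrix_apply]
    calc star (B (f j) (f i)) = Bᴴ (f i) (f j) := rfl
      _ = B (f i) (f j) := by rw [hB]
  obtain ⟨hleB, -⟩ := lamMin_facts hB
  obtain ⟨-, i0, hA0⟩ := lamMin_facts hA
  set v : m → ℝ := fun i => hA.eigenvectorBasis i0 i with hv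
  have hvv : v ⬝ᵥ v = 1 := by
    have hnorm := hA.eigenvectorBasis.orthonormal.1 i0
    have : v ⬝ᵥ v = @inner ℝ (EuclideanSpace ℝ m) _ (hA.eigenvectorBasis i0) (hA.eigenvectorBasis i0) := by
      simp only [dotProduct, PiLp.inner_apply, hv, RCLike.inner_apply, conj_trivial]
    rw [this, real_inner_self_eq_norm_mul_norm, hnorm, one_mul]
  have hAv : A *ᵥ v = (hA.eigenvalues i0) • v := hA.mulVec_eigenvectorBasis i0
  set w : n → ℝ := Function.extend f v 0 with hw
  have hwf : ∀ i, w (f i) = v i := fun i => hf.extend_apply v 0 i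
  have hw0 : ∀ j, (¬ ∃ i, f i = j) → w j = 0 := fun j hj => by
    rw [hw, Function.extend_apply' v (0 : n → ℝ) j hj]; rfl
  have hww : w ⬝ᵥ w = v ⬝ᵥ v := by
    rw [dotProduct, dotProduct,
      sum_extend f hf (fun j => w j * w j) (fun j hj => by simp only [hw0 j hj, mul_zero])]
    simp [hwf]
  have hBw : ∀ i, (B *ᵥ w) (f i) = (A *ᵥ v) i := by
    intro i
    simp only [Matrix.mulVec, dotProduct, hAdef, Matrix.submatrix_apply]
    rw [sum_extend f hf (fun k => B (f i) k * w k)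
      (fun k hk => by simp only [hw0 k hk, mul_zero])]
    simp [hwf]
  have hwBw : w ⬝ᵥ (B *ᵥ w) = v ⬝ᵥ (A *ᵥ v) := by
    rw [dotProduct, dotProduct,
      sum_extend f hf (fun j => w j * (B *ᵥ w) j)
        (fun j hj => by simp only [hw0 j hj, zero_mul])]
    exact Finset.sum_congr rfl fun i _ => by rw [hwf, hBw]
  have hray : lamMin B * (w ⬝ᵥ w) ≤ w ⬝ᵥ (B *ᵥ w) := quadform_lower' hB _ hleB w
  have hvAv : v ⬝ᵥ (A *ᵥ v) = hA.eigenvalues i0 := by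
    rw [hAv, dotProduct_smul, smul_eq_mul, hvv, mul_one]
  rw [hww, hvv, mul_one, hwBw, hvAv, ← hA0] at hray
  exact hray

/-- The doubling embedding. -/
def emb (n1 n2 : ℕ) (p : Fin n2 × Fin n1) : Fin (2 * n2) × Fin (2 * n1) :=
  (⟨(p.1 : ℕ), by omega⟩, ⟨(p.2 : ℕ), by omega⟩)

lemma emb_injective (n1 n2 : ℕ) : Function.Injective (emb n1 n2) := by
  intro p q h
  simp only [emb, Prod.ext_iff, Fin.ext_iff] at h ⊢
  exact h

lemma Cmat_symm (n1 n2 : ℕ) (x y : ℝ) : (Cmat n1 n2 x y x)ᵀ = Cmat n1 n2 x y x := by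
  ext p q
  simp only [Matrix.transpose_apply, Cmat]
  by_cases h0 : q = p
  · subst h0; simp
  · rw [if_neg h0, if_neg (fun h => h0 h.symm)]
    have eA : ((p.1 = q.1 ∧ (p.2 : ℕ) = ((q.2 : ℕ) + 1) % n1) ∨
        (p.2 = q.2 ∧ (p.1 : ℕ) = ((q.1 : ℕ) + 1) % n2)) ↔
        ((q.1 = p.1 ∧ ((q.2 : ℕ) + 1) % n1 = (p.2 : ℕ)) ∨
        (q.2 = p.2 ∧ ((q.1 : ℕ) + 1) % n2 = (p.1 : ℕ))) := by
      constructor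
      · rintro (⟨h1, h2⟩ | ⟨h1, h2⟩)
        · exact Or.inl ⟨h1.symm, h2.symm⟩
        · exact Or.inr ⟨h1.symm, h2.symm⟩
      · rintro (⟨h1, h2⟩ | ⟨h1, h2⟩)
        · exact Or.inl ⟨h1.symm, h2.symm⟩
        · exact Or.inr ⟨h1.symm, h2.symm⟩
    have eB : ((p.1 = q.1 ∧ ((p.2 : ℕ) + 1) % n1 = (q.2 : ℕ)) ∨
        (p.2 = q.2 ∧ ((p.1 : ℕ) + 1) % n2 = (q.1 : ℕ))) ↔
        ((q.1 = p.1 ∧ (q.2 : ℕ) = ((p.2 : ℕ) + 1) % n1) ∨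
        (q.2 = p.2 ∧ (q.1 : ℕ) = ((p.1 : ℕ) + 1) % n2)) := by
      constructor
      · rintro (⟨h1, h2⟩ | ⟨h1, h2⟩)
        · exact Or.inl ⟨h1.symm, h2.symm⟩
        · exact Or.inr ⟨h1.symm, h2.symm⟩
      · rintro (⟨h1, h2⟩ | ⟨h1, h2⟩)
        · exact Or.inl ⟨h1.symm, h2.symm⟩
        · exact Or.inr ⟨h1.symm, h2.symm⟩
    rw [if_congr eB.symm rfl (if_congr eA.symm rfl rfl)]
    by_cases hA : ((p.1 = q.1 ∧ (p.2 : ℕ) = ((q.2 : ℕ) + 1) % n1) ∨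
        (p.2 = q.2 ∧ (p.1 : ℕ) = ((q.1 : ℕ) + 1) % n2)) <;>
      by_cases hB : ((p.1 = q.1 ∧ ((p.2 : ℕ) + 1) % n1 = (q.2 : ℕ)) ∨
        (p.2 = q.2 ∧ ((p.1 : ℕ) + 1) % n2 = (q.1 : ℕ))) <;>
      simp [hA, hB]

lemma Tmat_eq_submatrix (n1 n2 : ℕ) (x y z : ℝ) :
    Tmat n1 n2 x y z =
      (Cmat (2 * n1) (2 * n2) x y z).submatrix (emb n1 n2) (emb n1 n2) := by
  ext p q
  have hp1 : (p.1 : ℕ) < n2 := p.1.isLt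
  have hp2 : (p.2 : ℕ) < n1 := p.2.isLt
  have hq1 : (q.1 : ℕ) < n2 := q.1.isLt
  have hq2 : (q.2 : ℕ) < n1 := q.2.isLt
  have m1 : ((p.2 : ℕ) + 1) % (2 * n1) = (p.2 : ℕ) + 1 := Nat.mod_eq_of_lt (by omega)
  have m2 : ((p.1 : ℕ) + 1) % (2 * n2) = (p.1 : ℕ) + 1 := Nat.mod_eq_of_lt (by omega)
  have m3 : ((q.2 : ℕ) + 1) % (2 * n1) = (q.2 : ℕ) + 1 := Nat.mod_eq_of_lt (by omega)
  have m4 : ((q.1 : ℕ) + 1) % (2 * n2) = (q.1 : ℕ) + 1 := Nat.mod_eq_of_lt (by omega)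
  simp only [Matrix.submatrix_apply, Tmat, Cmat, emb, Prod.ext_iff, Fin.ext_iff, m1, m2, m3, m4]

/-- The precision matrix `Q_{n1,n2}(θ)`, `θ = (φ, ρ11, ρ12, ρ21, ρ22)`. -/
def Qmat (n1 n2 : ℕ) (φ ρ11 ρ12 ρ21 ρ22 : ℝ) :
    Matrix ((Fin n2 × Fin n1) ⊕ (Fin n2 × Fin n1)) ((Fin n2 × Fin n1) ⊕ (Fin n2 × Fin n1)) ℝ :=
  Matrix.fromBlocks (Tmat n1 n2 ρ11 1 ρ11) (Tmat n1 n2 ρ21 φ ρ12)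
    (Tmat n1 n2 ρ21 φ ρ12)ᵀ (Tmat n1 n2 ρ22 1 ρ22)

/-- The block-circulant (toroidal) approximation `Q̃_{n1,n2}(θ)`. -/
def Qcmat (n1 n2 : ℕ) (φ ρ11 ρ12 ρ21 ρ22 : ℝ) :
    Matrix ((Fin n2 × Fin n1) ⊕ (Fin n2 × Fin n1)) ((Fin n2 × Fin n1) ⊕ (Fin n2 × Fin n1)) ℝ :=
  Matrix.fromBlocks (Cmat n1 n2 ρ11 1 ρ11) (Cmat n1 n2 ρ21 φ ρ12)
    (Cmat n1 n2 ρ21 φ ρ12)ᵀ (Cmat n1 n2 ρ22 1 ρ22)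

/-- The smallest eigenvalue of the block-circulant approximation on the doubled
lattice `2n1 × 2n2` is a lower bound for the smallest eigenvalue of the
precision matrix on the lattice `n1 × n2`. -/
theorem doubled_circulant_lower_bound (n1 n2 : ℕ) (h1 : 3 ≤ n1) (h2 : 3 ≤ n2)
    (φ ρ11 ρ12 ρ21 ρ22 : ℝ) :
    lamMin (Qcmat (2 * n1) (2 * n2) φ ρ11 ρ12 ρ21 ρ22) ≤
      lamMin (Qmat n1 n2 φ ρ11 ρ12 ρ21 ρ22) := by
  haveI hne : Nonempty ((Fin n2 × Fin n1) ⊕ (Fin n2 × Fin n1)) :=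
    ⟨Sum.inl (⟨0, by omega⟩, ⟨0, by omega⟩)⟩
  have hB : (Qcmat (2 * n1) (2 * n2) φ ρ11 ρ12 ρ21 ρ22).IsHermitian := by
    rw [Matrix.IsHermitian, Matrix.conjTranspose_eq_transpose_of_trivial, Qcmat,
      Matrix.fromBlocks_transpose, Matrix.transpose_transpose, Cmat_symm, Cmat_symm]
  have hQ : Qmat n1 n2 φ ρ11 ρ12 ρ21 ρ22 =
      (Qcmat (2 * n1) (2 * n2) φ ρ11 ρ12 ρ21 ρ22).submatrix
        (Sum.map (emb n1 n2) (emb n1 n2)) (Sum.map (emb n1 n2) (emb n1 n2)) := by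
    ext i j
    cases i <;> cases j <;>
      simp [Qmat, Qcmat, Tmat_eq_submatrix, Matrix.submatrix_apply, Sum.map,
        Matrix.fromBlocks]
  rw [hQ]
  exact lamMin_submatrix_le hB _
    ((emb_injective n1 n2).sumMap (emb_injective n1 n2))
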